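/- Let n > 1 be an integer. For all integers A and B with 2^(n-1) < A < 2^n and 2^(n-1) < B < 2^n, it holds that A / 2^(n-2) ≠ ((B + 1/2) / 2^(n-1))². That is, no precision-n floating-point number in the second binade [2,4) (with significand interior to the binade) is the square of a midpoint between consecutive precision-n significands. -/

import Mathlib

/-- No precision-`n` floating-point number `A / 2^(n-2)` in the second binade `[2,4)`
(with significand interior to the binade) is the square of a midpoint
`(B + 1/2) / 2^(n-1)` between consecutive precision-`n` significands. -/
theorem sqrt_not_midpoint_second_binade (n : ℕ) (hn : 1 < n) (A B : ℤ)
    (hA1 : 2 ^ (n - 1) < A) (hA2 : A < 2 ^ n)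
    (hB1 : 2 ^ (n - 1) < B) (hB2 : B < 2 ^ n) :
    (A : ℝ) / 2 ^ (n - 2) ≠ (((B : ℝ) + 1 / 2) / 2 ^ (n - 1)) ^ 2 := by
  intro h
  obtain ⟨m, rfl⟩ : ∃ m, n = m + 2 := ⟨n - 2, by omega⟩
  simp only [Nat.add_sub_cancel, show m + 2 - 1 = m + 1 from rfl] at h
  have hr : (A : ℝ) * 2 ^ (m + 4) = (2 * (B : ℝ) + 1) ^ 2 := by
    have hm : (2:ℝ) ^ m ≠ 0 := by positivity
    have hm1 : (2:ℝ) ^ (m + 1) ≠ 0 := by positivity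
    field_simp at h
    apply mul_right_cancel₀ hm
    calc (A:ℝ) * 2 ^ (m + 4) * 2 ^ m = (A : ℝ) * (2 * 2 ^ (m + 1)) ^ 2 := by ring
      _ = ((B : ℝ) * 2 + 1) ^ 2 * 2 ^ m := by linear_combination h
      _ = (2 * (B : ℝ) + 1) ^ 2 * 2 ^ m := by ring
  have hz : A * 2 ^ (m + 4) = (2 * B + 1) ^ 2 := by exact_mod_cast hr
  have he : Even (A * 2 ^ (m + 4)) := ⟨A * 2 ^ (m + 3), by ring⟩
  rw [hz] at he
  obtain ⟨r, hr⟩ := (Int.even_pow.mp he).1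
  omega
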